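/- Let H be a complex inner product space (Hilbert space), let u, v ∈ H be unit vectors, and let O be a continuous linear operator on H such that both O and Id − O are positive (i.e. 0 ≤ O ≤ I). Set y = Re⟨u, O u⟩ and z = |⟨v, u⟩|². Then Re⟨v, O v⟩ ≥ G₋(y, z). (Lower Cauchy–Schwarz constraint, Theorem 1 of the paper.) -/

import Mathlib

set_option maxHeartbeats 1000000
set_option synthInstance.maxHeartbeats 1000000

noncomputable def gMinus (y z : ℝ) : ℝ :=
  y + (1 - z) * (1 - 2 * y) - 2 * Real.sqrt (z * (1 - z) * y * (1 - y))

noncomputable def GMinus (y z : ℝ) : ℝ :=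
  if y > 1 - z then gMinus y z else 0

lemma key_alg (a b c d p q : ℝ) (ha : 0 ≤ a) (hb : 0 ≤ b) (hc : 0 ≤ c)
    (hd : 0 ≤ d) (hp : 0 ≤ p) (hq : 0 ≤ q)
    (hab : a ^ 2 + b ^ 2 = 1) (hpq : p ^ 2 + q ^ 2 = 1) (hcd : c ^ 2 + d ^ 2 = 1)
    (h : c ≤ a * p + b * q) : GMinus (a ^ 2) (c ^ 2) ≤ p ^ 2 := by
  unfold GMinus
  split
  case isFalse => positivity
  case isTrue hyz =>
    have hb2 : b ^ 2 = 1 - a ^ 2 := by linarith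
    have hd2 : d ^ 2 = 1 - c ^ 2 := by linarith
    have hsq : Real.sqrt (c ^ 2 * (1 - c ^ 2) * a ^ 2 * (1 - a ^ 2)) = a * b * c * d := by
      rw [show c ^ 2 * (1 - c ^ 2) * a ^ 2 * (1 - a ^ 2) = (a * b * c * d) ^ 2 by
        rw [← hb2, ← hd2]; ring]
      exact Real.sqrt_sq (by positivity)
    have hg : gMinus (a ^ 2) (c ^ 2) = (a * c - b * d) ^ 2 := by
      unfold gMinus
      rw [hsq]; ring_nf; nlinarith [hb2, hd2]
    rw [hg]
    have hbd : b * d < a * c := by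
      have h1 : (b * d) ^ 2 < (a * c) ^ 2 := by nlinarith [hb2, hd2]
      exact lt_of_pow_lt_pow_left₀ 2 (mul_nonneg ha hc) h1
    have hkey : a * c - b * d ≤ p := by
      rcases le_or_gt c (a * p) with hcase | hcase
      · have ha1 : a ≤ 1 := by nlinarith
        calc a * c - b * d ≤ a * c := by nlinarith [mul_nonneg hb hd]
          _ ≤ c := by nlinarith
          _ ≤ a * p := hcase
          _ ≤ p := by nlinarith
      · have h1 : c - a * p ≤ b * q := by linarith
        have h2 : (c - a * p) ^ 2 ≤ (b * q) ^ 2 := by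
          apply sq_le_sq' <;> nlinarith [mul_nonneg hb hq]
        have e : (p - a * c) ^ 2 - (b * d) ^ 2 =
            (c - a * p) ^ 2 - (b * q) ^ 2 + b ^ 2 * ((p ^ 2 + q ^ 2) - (c ^ 2 + d ^ 2)) +
              (p ^ 2 - c ^ 2) * (1 - (a ^ 2 + b ^ 2)) := by ring
        rw [hpq, hcd, hab] at e
        have h3 : (p - a * c) ^ 2 ≤ (b * d) ^ 2 := by linarith
        by_contra hcon
        push_neg at hcon
        have h4 : b * d < a * c - p := by linarith
        have h5 : (b * d) ^ 2 < (a * c - p) ^ 2 := pow_lt_pow_left₀ h4 (mul_nonneg hb hd) (by norm_num)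
        have h6 : (a * c - p) ^ 2 = (p - a * c) ^ 2 := by ring
        linarith
    have h0 : 0 ≤ a * c - b * d := le_of_lt (by linarith)
    calc (a * c - b * d) ^ 2 ≤ p ^ 2 := pow_le_pow_left₀ h0 hkey 2

theorem lower_cauchy_schwarz_constraint
    {H : Type*} [NormedAddCommGroup H] [InnerProductSpace ℂ H] [CompleteSpace H]
    (u v : H) (hu : ‖u‖ = 1) (hv : ‖v‖ = 1)
    (O : H →L[ℂ] H) (hO : O.IsPositive)
    (hO' : (ContinuousLinearMap.id ℂ H - O).IsPositive) :
    GMinus ((inner ℂ u (O u) : ℂ).re) (‖(inner ℂ v u : ℂ)‖ ^ 2) ≤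
      (inner ℂ v (O v) : ℂ).re := by
  have h0 : (0 : H →L[ℂ] H) ≤ O := O.nonneg_iff_isPositive.2 hO
  have h1 : (0 : H →L[ℂ] H) ≤ 1 - O := by
    rw [ContinuousLinearMap.nonneg_iff_isPositive]
    simpa [ContinuousLinearMap.one_def] using hO'
  set A := CFC.sqrt O with hA
  set B := CFC.sqrt (1 - O) with hB
  have hAA : A * A = O := CFC.sqrt_mul_sqrt_self O h0
  have hBB : B * B = 1 - O := CFC.sqrt_mul_sqrt_self (1 - O) h1
  have hAsa : IsSelfAdjoint A := IsSelfAdjoint.of_nonneg (CFC.sqrt_nonneg _)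
  have hBsa : IsSelfAdjoint B := IsSelfAdjoint.of_nonneg (CFC.sqrt_nonneg _)
  have hinnA : ∀ x y : H, (inner ℂ x (O y) : ℂ) = inner ℂ (A x) (A y) := by
    intro x y
    rw [← hAA, ContinuousLinearMap.mul_apply, ← ContinuousLinearMap.adjoint_inner_right A, ← ContinuousLinearMap.star_eq_adjoint, hAsa.star_eq]
  have hinnB : ∀ x y : H, (inner ℂ x ((1 - O) y) : ℂ) = inner ℂ (B x) (B y) := by
    intro x y
    rw [← hBB, ContinuousLinearMap.mul_apply, ← ContinuousLinearMap.adjoint_inner_right B, ← ContinuousLinearMap.star_eq_adjoint, hBsa.star_eq]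
  set a := ‖A u‖ with ha'
  set b := ‖B u‖ with hb'
  set p := ‖A v‖ with hp'
  set q := ‖B v‖ with hq'
  set c := ‖(inner ℂ v u : ℂ)‖ with hc'
  have hnorm : ∀ x : H, (inner ℂ x x : ℂ).re = ‖x‖ ^ 2 := fun x =>
    inner_self_eq_norm_sq (𝕜 := ℂ) x
  have hru : (inner ℂ u (O u) : ℂ).re = a ^ 2 := by
    rw [hinnA, ha', hnorm]
  have hrv : (inner ℂ v (O v) : ℂ).re = p ^ 2 := by
    rw [hinnA, hp', hnorm]
  have hsplit : ∀ x : H, (inner ℂ x (O x) : ℂ) + inner ℂ x ((1 - O) x) = inner ℂ x x := by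
    intro x
    rw [← inner_add_right]
    congr 1
    simp [ContinuousLinearMap.sub_apply]
  have hab : a ^ 2 + b ^ 2 = 1 := by
    have := congrArg Complex.re (hsplit u)
    simp only [Complex.add_re] at this
    rw [hinnA u u, hinnB u u, hnorm, hnorm, hnorm] at this
    simpa [hu] using this
  have hpq : p ^ 2 + q ^ 2 = 1 := by
    have := congrArg Complex.re (hsplit v)
    simp only [Complex.add_re] at this
    rw [hinnA v v, hinnB v v, hnorm, hnorm, hnorm] at this
    simpa [hv] using this
  have hc1 : c ≤ 1 := by
    calc c ≤ ‖v‖ * ‖u‖ := norm_inner_le_norm v u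
      _ = 1 := by rw [hu, hv, mul_one]
  have hkey : c ≤ a * p + b * q := by
    have hdecomp : (inner ℂ v u : ℂ) = inner ℂ (A v) (A u) + inner ℂ (B v) (B u) := by
      rw [← hinnA, ← hinnB]
      rw [← inner_add_right]
      congr 1
      simp [ContinuousLinearMap.sub_apply]
    calc c = ‖(inner ℂ (A v) (A u) : ℂ) + inner ℂ (B v) (B u)‖ := by rw [hc', hdecomp]
      _ ≤ ‖(inner ℂ (A v) (A u) : ℂ)‖ + ‖(inner ℂ (B v) (B u) : ℂ)‖ := norm_add_le _ _
      _ ≤ ‖A v‖ * ‖A u‖ + ‖B v‖ * ‖B u‖ :=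
          add_le_add (norm_inner_le_norm _ _) (norm_inner_le_norm _ _)
      _ = a * p + b * q := by ring
  set d := Real.sqrt (1 - c ^ 2) with hd'
  have hcd : c ^ 2 + d ^ 2 = 1 := by
    rw [hd', Real.sq_sqrt (by nlinarith [norm_nonneg ((inner ℂ v u : ℂ))])]
    ring
  rw [hru, hrv]
  exact key_alg a b c d p q (norm_nonneg _) (norm_nonneg _) (norm_nonneg _)
    (Real.sqrt_nonneg _) (norm_nonneg _) (norm_nonneg _) hab hpq hcd hkey
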